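/- For the qubit phase–dephasing model ρ(φ,Δ), the SLD quantum Fisher information matrix in parameters (φ,Δ) is diagonal: the off-diagonal entry (1/2)Tr[ρ(L_φ L_Δ + L_Δ L_φ)] vanishes. -/

import Mathlib

open Matrix

/-- The qubit phase–dephasing state ρ(φ,Δ). -/
noncomputable def rho (φ Δ : ℝ) : Matrix (Fin 2) (Fin 2) ℂ :=
  ((1:ℂ)/2) • !![1, (1 - (Δ:ℂ)) * Complex.exp (Complex.I * φ);
                 (1 - (Δ:ℂ)) * Complex.exp (-(Complex.I * φ)), 1]

/-- The SLD operator L_φ = i(1-Δ)(e^{-iφ}|1⟩⟨0| - e^{iφ}|0⟩⟨1|). -/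
noncomputable def Lphi (φ Δ : ℝ) : Matrix (Fin 2) (Fin 2) ℂ :=
  !![0, -(Complex.I * (1 - (Δ:ℂ)) * Complex.exp (Complex.I * φ));
     Complex.I * (1 - (Δ:ℂ)) * Complex.exp (-(Complex.I * φ)), 0]


/-- The SLD quantum Fisher information matrix in (φ,Δ) is diagonal: for any Hermitian
SLD L_Δ for Δ, the off-diagonal entry (1/2)Tr[ρ(L_φ L_Δ + L_Δ L_φ)] vanishes. -/
theorem stmt9 (φ Δ : ℝ) (hΔ : Δ ∈ Set.Ioo (0:ℝ) 1)
    (LΔ : Matrix (Fin 2) (Fin 2) ℂ) (hLΔ : LΔ.IsHermitian)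
    (hSLD : ∀ i j, HasDerivAt (fun t : ℝ => rho φ t i j)
      ((((1:ℂ)/2) • (LΔ * rho φ Δ + rho φ Δ * LΔ)) i j) Δ) :
    ((1:ℂ)/2) * (rho φ Δ * (Lphi φ Δ * LΔ + LΔ * Lphi φ Δ)).trace = 0 := by
  have hderivΔ : HasDerivAt (fun t : ℝ => ((t : ℂ))) 1 Δ := by
    simpa using (hasDerivAt_id Δ).ofReal_comp
  -- derivative of entry (0,1)
  have h01 : ((((1:ℂ)/2) • (LΔ * rho φ Δ + rho φ Δ * LΔ)) 0 1)
      = -((1:ℂ)/2) * Complex.exp (Complex.I * φ) := by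
    have hf : (fun t : ℝ => rho φ t 0 1)
        = fun t : ℝ => ((1:ℂ)/2) * ((1 - (t:ℂ)) * Complex.exp (Complex.I * φ)) := by
      funext t; simp [rho]
    have hd : HasDerivAt (fun t : ℝ =>
        ((1:ℂ)/2) * ((1 - (t:ℂ)) * Complex.exp (Complex.I * φ)))
        (-((1:ℂ)/2) * Complex.exp (Complex.I * φ)) Δ := by
      have := (((hderivΔ.const_sub (1:ℂ)).mul_const
        (Complex.exp (Complex.I * φ))).const_mul ((1:ℂ)/2))
      simpa using this.congr_deriv (by ring)
    have := hSLD 0 1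
    rw [hf] at this
    exact this.unique hd
  -- derivative of entry (1,0)
  have h10 : ((((1:ℂ)/2) • (LΔ * rho φ Δ + rho φ Δ * LΔ)) 1 0)
      = -((1:ℂ)/2) * Complex.exp (-(Complex.I * φ)) := by
    have hf : (fun t : ℝ => rho φ t 1 0)
        = fun t : ℝ => ((1:ℂ)/2) * ((1 - (t:ℂ)) * Complex.exp (-(Complex.I * φ))) := by
      funext t; simp [rho]
    have hd : HasDerivAt (fun t : ℝ =>
        ((1:ℂ)/2) * ((1 - (t:ℂ)) * Complex.exp (-(Complex.I * φ))))
        (-((1:ℂ)/2) * Complex.exp (-(Complex.I * φ))) Δ := by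
      have := (((hderivΔ.const_sub (1:ℂ)).mul_const
        (Complex.exp (-(Complex.I * φ)))).const_mul ((1:ℂ)/2))
      simpa using this.congr_deriv (by ring)
    have := hSLD 1 0
    rw [hf] at this
    exact this.unique hd
  have hexp : Complex.exp (Complex.I * φ) * Complex.exp (-(Complex.I * φ)) = 1 := by
    rw [← Complex.exp_add]; simp
  simp only [rho, Lphi, Matrix.smul_apply, Matrix.mul_apply, Matrix.add_apply,
    Fin.sum_univ_two, Matrix.of_apply, Matrix.cons_val', Matrix.cons_val_zero,
    Matrix.cons_val_one, Matrix.head_cons, Matrix.head_fin_const, Matrix.empty_val',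
    Matrix.cons_val_fin_one, Matrix.trace_fin_two, smul_eq_mul] at h01 h10 ⊢
  set e := Complex.exp (Complex.I * φ)
  set f := Complex.exp (-(Complex.I * φ))
  set a := LΔ 0 0; set b := LΔ 0 1; set c := LΔ 1 0; set d := LΔ 1 1
  linear_combination (Complex.I * (1 - (Δ:ℂ)) * f) * h01
    - (Complex.I * (1 - (Δ:ℂ)) * e) * h10
    + (Complex.I * (1 - (Δ:ℂ)) * (1 - (Δ:ℂ)/2 - (Δ:ℂ)/2 + (Δ:ℂ)*(Δ:ℂ)/2) * (a + d) / 2) * hexp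
    - (Complex.I * (a + d) * ((1:ℂ)/2 - (Δ:ℂ) + 3*(Δ:ℂ)^2/4 - (Δ:ℂ)^3/4)) * hexp
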